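/- arXiv:2206.08226 — 3 statements merged into one kernel-verified Lean document; each statement's English description precedes it below -/
import Mathlib

section
/- Let G be a finite group acting on a set S, χ : G → k^× a group homomorphism (char k = 0), f : kS → kS the linear map with f(x) = Σ_{g∈G} χ(g)(g·x) for x ∈ S. Let X̃ ⊆ S be a set of orbit representatives and X := {x ∈ X̃ : χ|_{G_x} ≡ 1}. Then f restricts to a linear isomorphism from the span of X onto the image f(kS), and f vanishes on X̃ \ X. -/
section aux

variable {k G S : Type*} [Field k] [CharZero k] [Group G] [Fintype G]
    [MulAction G S] (χ : G →* kˣ)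
    (f : (S →₀ k) →ₗ[k] (S →₀ k))

/-- Key reindexing identity: `χ g • f(single (g•s)) = f(single s)`. -/
lemma stmt2_keyA
    (hf : ∀ s : S, f (Finsupp.single s 1) = ∑ g : G, (χ g : k) • Finsupp.single (g • s) 1)
    (g : G) (s : S) :
    (χ g : k) • f (Finsupp.single (g • s) 1) = f (Finsupp.single s 1) := by
  rw [hf, hf, Finset.smul_sum]
  have := Fintype.sum_bijective (· * g) (Group.mulRight_bijective g)
    (fun h : G => (χ (h * g) : k) • Finsupp.single ((h * g) • s) (1 : k))
    (fun h : G => (χ h : k) • Finsupp.single (h • s) (1 : k)) (fun h => rfl)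
  rw [← this]
  refine Finset.sum_congr rfl fun h _ => ?_
  rw [smul_smul, ← mul_smul h g s]
  simp only [map_mul, Units.val_mul, mul_comm]

/-- Vanishing on non-`X` reps. -/
lemma stmt2_vanish
    (hf : ∀ s : S, f (Finsupp.single s 1) = ∑ g : G, (χ g : k) • Finsupp.single (g • s) 1)
    (x : S) (g : G) (hg : g ∈ MulAction.stabilizer G x) (hχ : χ g ≠ 1) :
    f (Finsupp.single x 1) = 0 := by
  have h := stmt2_keyA χ f hf g x
  rw [show g • x = x from hg] at h
  have h2 : ((χ g : k) - 1) • f (Finsupp.single x 1) = 0 := by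
    rw [sub_smul, one_smul, h, sub_self]
  have hne : ((χ g : k) - 1) ≠ 0 := by
    intro hc
    exact hχ (Units.val_eq_one.mp (sub_eq_zero.mp hc))
  exact (smul_eq_zero.mp h2).resolve_left hne

omit [CharZero k] in
/-- Support of `f(single x)` is inside the orbit of `x`. -/
lemma stmt2_supp
    (hf : ∀ s : S, f (Finsupp.single s 1) = ∑ g : G, (χ g : k) • Finsupp.single (g • s) 1)
    (x : S) (s : S) (hs : s ∉ MulAction.orbit G x) :
    (f (Finsupp.single x 1)) s = 0 := by
  classical
  rw [hf, Finsupp.finset_sum_apply]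
  refine Finset.sum_eq_zero fun g _ => ?_
  rw [Finsupp.smul_apply, Finsupp.single_apply, if_neg, smul_zero]
  intro h
  exact hs ⟨g, h⟩

/-- Nonzero diagonal coefficient for `x` with trivial character on the stabilizer. -/
lemma stmt2_diag
    (hf : ∀ s : S, f (Finsupp.single s 1) = ∑ g : G, (χ g : k) • Finsupp.single (g • s) 1)
    (x : S) (hx : ∀ g ∈ MulAction.stabilizer G x, χ g = 1) :
    (f (Finsupp.single x 1)) x ≠ 0 := by
  classical
  rw [hf, Finsupp.finset_sum_apply]
  have hterm : ∀ g : G, ((χ g : k) • Finsupp.single (g • x) (1 : k)) x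
      = if g • x = x then (1 : k) else 0 := by
    intro g
    rw [Finsupp.smul_apply, Finsupp.single_apply]
    by_cases h : g • x = x
    · simp only [if_pos h, hx g h, Units.val_one, smul_eq_mul, mul_one]
    · simp only [if_neg h, smul_zero]
  rw [Finset.sum_congr rfl fun g _ => hterm g, Finset.sum_boole]
  rw [Nat.cast_ne_zero]
  exact Finset.card_ne_zero_of_mem (Finset.mem_filter.mpr ⟨Finset.mem_univ 1, one_smul G x⟩)

end aux

set_option maxHeartbeats 1000000 in
/-- Let `G` be a finite group acting on a set `S`, `χ : G → kˣ` a group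
homomorphism (char k = 0), and `f : kS → kS` the linear map with
`f(x) = ∑_{g ∈ G} χ(g)(g·x)` for `x ∈ S`. Let `X̃ ⊆ S` be a set of orbit representatives
and `X := {x ∈ X̃ : χ|_{G_x} ≡ 1}`. Then `f` restricts to a linear isomorphism from the
span of `X` onto the image `f(kS)`, and `f` vanishes on `X̃ \ X`. -/
theorem stmt_2 {k G S : Type*} [Field k] [CharZero k] [Group G] [Fintype G]
    [MulAction G S] (χ : G →* kˣ)
    (f : (S →₀ k) →ₗ[k] (S →₀ k))
    (hf : ∀ s : S, f (Finsupp.single s 1) = ∑ g : G, (χ g : k) • Finsupp.single (g • s) 1)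
    (Xt : Set S) (hXt : ∀ s : S, ∃! y, y ∈ Xt ∧ y ∈ MulAction.orbit G s)
    (X : Set S) (hX : X = {x ∈ Xt | ∀ g ∈ MulAction.stabilizer G x, χ g = 1}) :
    (∀ x ∈ Xt, x ∉ X → f (Finsupp.single x 1) = 0) ∧
    ∃ e : (Submodule.span k ((fun s => Finsupp.single s (1 : k)) '' X)) ≃ₗ[k]
        LinearMap.range f,
      ∀ v : Submodule.span k ((fun s => Finsupp.single s (1 : k)) '' X),
        ((e v : S →₀ k)) = f (v : S →₀ k) := by
  classical
  -- orbit disjointness of representatives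
  have horb : ∀ x ∈ Xt, ∀ x' ∈ Xt, ∀ s : S, s ∈ MulAction.orbit G x →
      s ∈ MulAction.orbit G x' → x = x' := by
    intro x hx x' hx' s hs hs'
    obtain ⟨y, _, huniq⟩ := hXt s
    have e1 : x = y := huniq x ⟨hx, MulAction.mem_orbit_symm.mpr hs⟩
    have e2 : x' = y := huniq x' ⟨hx', MulAction.mem_orbit_symm.mpr hs'⟩
    rw [e1, e2]
  have hXsub : X ⊆ Xt := by rw [hX]; exact fun x hx => hx.1
  have hXtriv : ∀ x ∈ X, ∀ g ∈ MulAction.stabilizer G x, χ g = 1 := by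
    rw [hX]; exact fun x hx => hx.2
  -- part 1
  have h1 : ∀ x ∈ Xt, x ∉ X → f (Finsupp.single x 1) = 0 := by
    intro x hx hxX
    have hne : ¬ (∀ g ∈ MulAction.stabilizer G x, χ g = 1) := by
      intro h
      exact hxX (by rw [hX]; exact ⟨hx, h⟩)
    push_neg at hne
    obtain ⟨g, hg, hgne⟩ := hne
    exact stmt2_vanish χ f hf x g hg hgne
  refine ⟨h1, ?_⟩
  set P := Submodule.span k ((fun s => Finsupp.single s (1 : k)) '' X) with hP
  have hPsupp : P = Finsupp.supported k k X := (Finsupp.supported_eq_span_single k X).symm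
  -- injectivity of f on P
  have hinj0 : ∀ v ∈ P, f v = 0 → v = 0 := by
    intro v hv hfv
    rw [hPsupp, Finsupp.mem_supported] at hv
    by_contra hne
    obtain ⟨x₀, hx₀⟩ := Finsupp.support_nonempty_iff.mpr hne
    have hx₀X : x₀ ∈ X := hv hx₀
    have hexp : f v = ∑ x ∈ v.support, v x • f (Finsupp.single x 1) := by
      conv_lhs => rw [← Finsupp.sum_single v]
      rw [Finsupp.sum, map_sum]
      refine Finset.sum_congr rfl fun x _ => ?_
      rw [← Finsupp.smul_single_one, map_smul]
    have hzero : (f v) x₀ = 0 := by rw [hfv]; rfl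
    rw [hexp, Finsupp.finset_sum_apply] at hzero
    have honly : ∀ x ∈ v.support, x ≠ x₀ → (v x • f (Finsupp.single x 1)) x₀ = 0 := by
      intro x hxs hne'
      have hxX : x ∈ X := hv hxs
      have : x₀ ∉ MulAction.orbit G x := by
        intro hmem
        exact hne' (horb x (hXsub hxX) x₀ (hXsub hx₀X) x₀ hmem (MulAction.mem_orbit_self x₀))
      rw [Finsupp.smul_apply, stmt2_supp χ f hf x x₀ this, smul_zero]
    rw [Finset.sum_eq_single x₀ honly (fun h => absurd hx₀ h)] at hzero
    rw [Finsupp.smul_apply, smul_eq_mul, mul_eq_zero] at hzero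
    rcases hzero with h | h
    · exact Finsupp.mem_support_iff.mp hx₀ h
    · exact stmt2_diag χ f hf x₀ (hXtriv x₀ hx₀X) h
  -- image of P under f is the whole range
  have hrange : Submodule.map f P = LinearMap.range f := by
    apply le_antisymm
    · rintro _ ⟨v, _, rfl⟩; exact ⟨v, rfl⟩
    · rw [LinearMap.range_eq_map, ← (Finsupp.supported_univ : Finsupp.supported k k (Set.univ : Set S) = ⊤),
        Finsupp.supported_eq_span_single, Submodule.map_span]
      apply Submodule.span_le.mpr
      rintro _ ⟨_, ⟨s, -, rfl⟩, rfl⟩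
      obtain ⟨y, ⟨hyXt, hyorb⟩, -⟩ := hXt s
      obtain ⟨g, rfl⟩ := MulAction.mem_orbit_iff.mp hyorb
      have hkey := stmt2_keyA χ f hf g s
      by_cases hyX : g • s ∈ X
      · have hmem : Finsupp.single (g • s) (1 : k) ∈ P :=
          Submodule.subset_span ⟨g • s, hyX, rfl⟩
        rw [← hkey]
        exact Submodule.smul_mem _ _ ⟨Finsupp.single (g • s) 1, hmem, rfl⟩
      · rw [← hkey, h1 (g • s) hyXt hyX, smul_zero]
        exact Submodule.zero_mem _
  have hFinj : Function.Injective (f.domRestrict P) := by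
    intro a b hab
    have h0 : f ((a : S →₀ k) - b) = 0 := by
      rw [map_sub]
      exact sub_eq_zero.mpr (by simpa [LinearMap.domRestrict_apply] using hab)
    have := hinj0 _ (P.sub_mem a.2 b.2) h0
    exact Subtype.ext (sub_eq_zero.mp this)
  refine ⟨(LinearEquiv.ofInjective (f.domRestrict P) hFinj).trans
    (LinearEquiv.ofEq _ _ (by rw [LinearMap.range_domRestrict, hrange])), fun v => ?_⟩
  simp [LinearEquiv.ofInjective_apply]
end

section
/- The formal power series identity det(1 − τA)^{-1} = exp(Σ_{k≥1} τ^k tr(A^k)/k) holds for any square matrix A over a commutative ℚ-algebra, as an identity of formal power series in τ. -/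
open PowerSeries

/-- The exponential `exp(S)` of a power series `S` with zero constant term: for fixed `d`,
only the terms `S^j/j!` with `j ≤ d` contribute to the coefficient of `τ^d`. -/
noncomputable def expOf {R : Type*} [CommRing R] [Algebra ℚ R] (S : PowerSeries R) :
    PowerSeries R :=
  PowerSeries.mk fun d =>
    ∑ j ∈ Finset.range (d + 1), ((j.factorial : ℚ)⁻¹) • (PowerSeries.coeff d (S ^ j))

theorem aux_deriv_prod {R A : Type*} [CommRing R] [CommRing A] [Algebra R A]
    (d : Derivation R A A) {ι : Type*} [DecidableEq ι] (s : Finset ι) (f : ι → A) :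
    d (∏ i ∈ s, f i) = ∑ i ∈ s, (∏ j ∈ s.erase i, f j) * d (f i) := by
  induction s using Finset.induction_on with
  | empty => simp
  | @insert a s ha ih =>
    rw [Finset.prod_insert ha, Derivation.leibniz, Finset.sum_insert ha,
      Finset.erase_insert ha, ih, smul_eq_mul, smul_eq_mul, Finset.mul_sum, add_comm]
    congr 1
    apply Finset.sum_congr rfl
    intro i hi
    rw [Finset.erase_insert_of_ne (fun h : a = i => ha (by rw [h]; exact hi)),
      Finset.prod_insert (fun h => ha (Finset.mem_of_mem_erase h))]
    ring

open Matrix in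
theorem aux_deriv_det {R A : Type*} [CommRing R] [CommRing A] [Algebra R A]
    (d : Derivation R A A) {n : Type*} [DecidableEq n] [Fintype n]
    (M : Matrix n n A) :
    d M.det = ∑ i, (M.updateRow i fun j => d (M i j)).det := by
  have hdet : ∀ (P : Matrix n n A), P.det = ∑ σ : Equiv.Perm n,
      ((Equiv.Perm.sign σ : ℤ) : A) * ∏ i, P i (σ i) := by
    intro P
    rw [← Matrix.det_transpose P, Matrix.det_apply']
    simp [Matrix.transpose_apply]
  rw [hdet M, map_sum]
  have step : ∀ σ : Equiv.Perm n,
      d (((Equiv.Perm.sign σ : ℤ) : A) * ∏ i, M i (σ i))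
      = ∑ i, ((Equiv.Perm.sign σ : ℤ) : A) *
          ((∏ j ∈ Finset.univ.erase i, M j (σ j)) * d (M i (σ i))) := by
    intro σ
    rw [Derivation.leibniz, Derivation.map_intCast, smul_zero, add_zero, smul_eq_mul,
      aux_deriv_prod d, Finset.mul_sum]
  rw [Finset.sum_congr rfl fun σ _ => step σ, Finset.sum_comm]
  apply Finset.sum_congr rfl
  intro i _
  rw [hdet]
  apply Finset.sum_congr rfl
  intro σ _
  congr 1
  rw [← Finset.prod_erase_mul (a := i) _ _ (Finset.mem_univ i), Matrix.updateRow_self]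
  congr 1
  apply Finset.prod_congr rfl
  intro j hj
  rw [Matrix.updateRow_ne (Finset.ne_of_mem_erase hj)]

open Matrix in
theorem aux_det_updateRow {α : Type*} [CommRing α] {n : Type*} [DecidableEq n] [Fintype n]
    (M : Matrix n n α) (i : n) (v : n → α) :
    (M.updateRow i v).det = ∑ j, v j * Matrix.adjugate M j i := by
  have h1 : (M.updateRow i v).det = Matrix.cramer (Mᵀ) v i := by
    rw [Matrix.cramer_apply, Matrix.updateCol_transpose, Matrix.det_transpose]
  have h2 : v = ∑ j, (v j) • (Pi.single j 1 : n → α) := by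
    funext k
    simp [Finset.sum_apply, Pi.single_apply]
  rw [h1]
  conv_lhs => rw [h2]
  rw [map_sum, Finset.sum_apply]
  apply Finset.sum_congr rfl
  intro j _
  rw [_root_.map_smul, Pi.smul_apply, smul_eq_mul]
  congr 1

section ExpLemmas

variable {R : Type*} [CommRing R] [Algebra ℚ R]

omit [Algebra ℚ R] in
theorem aux_coeff_pow_eq_zero {S : PowerSeries R} (hS : constantCoeff S = 0)
    {i a : ℕ} (h : a < i) : coeff a (S ^ i) = 0 :=
  PowerSeries.X_pow_dvd_iff.mp (pow_dvd_pow_of_dvd (PowerSeries.X_dvd_iff.mpr hS) i) a h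

theorem aux_constantCoeff_expOf (S : PowerSeries R) : constantCoeff (expOf S) = 1 := by
  have : constantCoeff (expOf S) = coeff 0 (expOf S) := by
    rw [coeff_zero_eq_constantCoeff]
  rw [this, expOf, coeff_mk]
  simp

theorem aux_deriv_expOf {S : PowerSeries R} (hS : constantCoeff S = 0) :
    d⁄dX R (expOf S) = (d⁄dX R S) * expOf S := by
  ext n
  rw [PowerSeries.coeff_derivative, expOf, coeff_mk, Finset.sum_mul]
  calc
    (∑ j ∈ Finset.range (n + 1 + 1), ((j.factorial : ℚ)⁻¹ • coeff (n+1) (S ^ j)) * (n + 1 : R))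
        = ∑ j ∈ Finset.range (n + 1 + 1), (j.factorial : ℚ)⁻¹ • coeff n (d⁄dX R (S ^ j)) := by
      apply Finset.sum_congr rfl
      intro j _
      rw [smul_mul_assoc, PowerSeries.coeff_derivative]
    _ = ∑ i ∈ Finset.range (n + 1), (i.factorial : ℚ)⁻¹ • coeff n ((S ^ i) * d⁄dX R S) := by
      rw [Finset.sum_range_succ']
      simp only [pow_zero, Derivation.map_one_eq_zero, map_zero, smul_zero, add_zero]
      apply Finset.sum_congr rfl
      intro i _
      rw [Derivation.leibniz_pow, Nat.add_sub_cancel, map_nsmul, smul_eq_mul,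
        ← Nat.cast_smul_eq_nsmul ℚ, smul_smul, Nat.factorial_succ]
      congr 2
      push_cast
      rw [mul_inv, mul_comm ((i+1 : ℚ))⁻¹, mul_assoc, inv_mul_cancel₀ (by positivity), mul_one]
    _ = ∑ p ∈ Finset.HasAntidiagonal.antidiagonal n, ∑ i ∈ Finset.range (n + 1),
          (i.factorial : ℚ)⁻¹ • (coeff p.1 (S ^ i) * coeff p.2 (d⁄dX R S)) := by
      rw [Finset.sum_comm]
      apply Finset.sum_congr rfl
      intro i _
      rw [PowerSeries.coeff_mul, Finset.smul_sum]
    _ = ∑ p ∈ Finset.HasAntidiagonal.antidiagonal n, ∑ i ∈ Finset.range (p.1 + 1),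
          (i.factorial : ℚ)⁻¹ • (coeff p.1 (S ^ i) * coeff p.2 (d⁄dX R S)) := by
      apply Finset.sum_congr rfl
      intro p hp
      have hle : p.1 + 1 ≤ n + 1 := by
        have := Finset.HasAntidiagonal.mem_antidiagonal.mp hp
        omega
      rw [← Finset.sum_subset (Finset.range_subset_range.mpr hle)]
      intro i hi hni
      rw [aux_coeff_pow_eq_zero hS (by simpa using hni), zero_mul, smul_zero]
    _ = coeff n (d⁄dX R S * expOf S) := by
      rw [PowerSeries.coeff_mul,
        ← Finset.Nat.sum_antidiagonal_swap
          (f := fun q : ℕ × ℕ => coeff q.1 (d⁄dX R S) * coeff q.2 (expOf S))]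
      apply Finset.sum_congr rfl
      intro p _
      simp only [Prod.fst_swap, Prod.snd_swap]
      rw [expOf, coeff_mk, Finset.mul_sum]
      apply Finset.sum_congr rfl
      intro i _
      rw [mul_smul_comm, mul_comm]

end ExpLemmas

/-- For any square matrix `A` over a commutative `ℚ`-algebra `R`, the formal
power series identity `det(1 − τA)⁻¹ = exp(∑_{k ≥ 1} τ^k tr(A^k)/k)` holds, i.e.
`det(1 − τA) · exp(∑_{k ≥ 1} τ^k tr(A^k)/k) = 1`. -/
theorem stmt_10 {R : Type*} [CommRing R] [Algebra ℚ R] {N : ℕ}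
    (A : Matrix (Fin N) (Fin N) R) :
    Matrix.det (1 - (PowerSeries.X : PowerSeries R) • A.map (PowerSeries.C (R := R))) *
      expOf (PowerSeries.mk fun d =>
        if d = 0 then 0 else ((d : ℚ)⁻¹) • Matrix.trace (A ^ d)) = 1 := by
  classical
  set B : Matrix (Fin N) (Fin N) (PowerSeries R) := A.map (PowerSeries.C (R := R)) with hB
  set M : Matrix (Fin N) (Fin N) (PowerSeries R) := 1 - (X : PowerSeries R) • B with hM
  set S : PowerSeries R := PowerSeries.mk fun d =>
    if d = 0 then 0 else ((d : ℚ)⁻¹) • Matrix.trace (A ^ d) with hSdef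
  set T : PowerSeries R := PowerSeries.mk fun k => Matrix.trace (A ^ (k + 1)) with hT
  set D : PowerSeries R := M.det with hD
  have hS0 : constantCoeff S = 0 := by
    rw [← coeff_zero_eq_constantCoeff, hSdef, coeff_mk]
    simp
  have hST : d⁄dX R S = T := by
    ext n
    rw [PowerSeries.coeff_derivative, hSdef, hT, coeff_mk, coeff_mk, if_neg (Nat.succ_ne_zero n)]
    rw [smul_mul_assoc]
    have hcast : (Matrix.trace (A ^ (n+1)) * ((n : R) + 1))
        = (((n : ℚ)) + 1) • Matrix.trace (A ^ (n+1)) := by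
      rw [Algebra.smul_def, mul_comm]
      congr 1
      have : ((n : ℚ) + 1) = ((n + 1 : ℕ) : ℚ) := by push_cast; ring
      rw [this, map_natCast]
      push_cast
      ring
    rw [hcast, smul_smul]
    have hne : ((n : ℚ) + 1) ≠ 0 := by positivity
    have : ((n : ℚ) + 1)⁻¹ * ((n : ℚ) + 1) = 1 := inv_mul_cancel₀ hne
    rw [show ((n + 1 : ℕ) : ℚ) = (n : ℚ) + 1 by push_cast; ring, this, one_smul]
  -- the "resolvent" matrix (1 - X A)⁻¹ = ∑ X^k A^k
  set Nm : Matrix (Fin N) (Fin N) (PowerSeries R) :=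
    Matrix.of fun i j => PowerSeries.mk fun k => (A ^ k) i j with hNm
  have hBN : ∀ i j, (B * Nm) i j = PowerSeries.mk fun k => (A ^ (k + 1)) i j := by
    intro i j
    ext k
    rw [Matrix.mul_apply, coeff_mk, map_sum]
    have : ∀ l, coeff k (B i l * Nm l j) = A i l * (A ^ k) l j := by
      intro l
      rw [hB, hNm, Matrix.map_apply, Matrix.of_apply, PowerSeries.coeff_C_mul, coeff_mk]
    rw [Finset.sum_congr rfl fun l _ => this l]
    rw [pow_succ', Matrix.mul_apply]
  have hMN : M * Nm = 1 := by
    rw [hM, Matrix.sub_mul, Matrix.one_mul, Matrix.smul_mul]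
    ext i j k
    rw [Matrix.sub_apply, Matrix.smul_apply, hBN i j, map_sub]
    cases k with
    | zero =>
      rw [smul_eq_mul, coeff_zero_eq_constantCoeff, map_mul]
      simp [hNm, Matrix.one_apply, Matrix.of_apply, ← coeff_zero_eq_constantCoeff,
        coeff_mk, pow_zero]
    | succ k =>
      rw [smul_eq_mul, PowerSeries.coeff_succ_X_mul, coeff_mk]
      simp only [Matrix.one_apply, hNm, Matrix.of_apply, coeff_mk]
      split_ifs <;> simp
  have hadj : Matrix.adjugate M = D • Nm := by
    calc Matrix.adjugate M = Matrix.adjugate M * (M * Nm) := by rw [hMN, Matrix.mul_one]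
    _ = (Matrix.adjugate M * M) * Nm := by rw [Matrix.mul_assoc]
    _ = (D • (1 : Matrix (Fin N) (Fin N) (PowerSeries R))) * Nm := by rw [Matrix.adjugate_mul]
    _ = D • Nm := by rw [Matrix.smul_mul, Matrix.one_mul]
  have htrBN : ∑ i, ∑ j, B i j * Nm j i = T := by
    ext k
    rw [hT, coeff_mk, map_sum]
    have : ∀ i, (coeff k) (∑ j, B i j * Nm j i) = (A ^ (k+1)) i i := by
      intro i
      have := congrArg (coeff k) (hBN i i)
      rw [Matrix.mul_apply] at this
      rw [this, coeff_mk]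
    rw [Finset.sum_congr rfl fun i _ => this i]
    rfl
  have hMij : ∀ i j, (d⁄dX R) (M i j) = -(B i j) := by
    intro i j
    have hentry : M i j = (1 : Matrix (Fin N) (Fin N) (PowerSeries R)) i j - X * B i j := by
      rw [hM, Matrix.sub_apply, Matrix.smul_apply, smul_eq_mul]
    rw [hentry, map_sub]
    have h1 : (d⁄dX R) ((1 : Matrix (Fin N) (Fin N) (PowerSeries R)) i j) = 0 := by
      by_cases h : i = j <;> simp [Matrix.one_apply, h]
    have h2 : (d⁄dX R) (B i j) = 0 := by
      rw [hB, Matrix.map_apply]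
      simp
    rw [h1, Derivation.leibniz, h2, PowerSeries.derivative_X, smul_zero, smul_eq_mul, mul_one,
      zero_add, zero_sub]
  have hDder : d⁄dX R D = -(D * T) := by
    rw [hD, aux_deriv_det (d⁄dX R) M]
    have hrow : ∀ i, (M.updateRow i fun j => (d⁄dX R) (M i j)).det
        = -∑ j, B i j * Matrix.adjugate M j i := by
      intro i
      have : (fun j => (d⁄dX R) (M i j)) = (-1 : PowerSeries R) • (fun j => B i j) := by
        funext j
        rw [hMij i j, Pi.smul_apply, smul_eq_mul, neg_one_mul]
      rw [this, Matrix.det_updateRow_smul, aux_det_updateRow, neg_one_mul]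
    have hkey : ∑ i, ∑ j, B i j * Matrix.adjugate M j i = M.det * T := by
      rw [hadj, ← htrBN, Finset.mul_sum]
      apply Finset.sum_congr rfl
      intro i _
      rw [Finset.mul_sum]
      apply Finset.sum_congr rfl
      intro j _
      rw [Matrix.smul_apply, smul_eq_mul, hD]
      ring
    rw [Finset.sum_congr rfl fun i _ => hrow i, Finset.sum_neg_distrib, hkey]
  -- final assembly
  have hE := aux_deriv_expOf hS0
  have key : d⁄dX R (D * expOf S) = 0 := by
    rw [Derivation.leibniz, hE, hST, hDder, smul_eq_mul, smul_eq_mul]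
    ring
  haveI : NoZeroSMulDivisors ℕ R := ⟨by
    intro c x h
    by_cases hc : c = 0
    · exact Or.inl hc
    · right
      have h1 : ((c : ℚ)) • x = 0 := by rwa [Nat.cast_smul_eq_nsmul]
      have h2 := congrArg (fun y => ((c : ℚ))⁻¹ • y) h1
      simpa [smul_smul, inv_mul_cancel₀ (show (c:ℚ) ≠ 0 from Nat.cast_ne_zero.mpr hc)] using h2⟩
  haveI : IsAddTorsionFree R := ⟨fun n hn a b h =>
    sub_eq_zero.mp ((smul_eq_zero.mp (by rw [smul_sub]; exact sub_eq_zero.mpr h)).resolve_left hn)⟩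
  have hc0 : constantCoeff (D * expOf S) = constantCoeff (1 : PowerSeries R) := by
    rw [map_mul, aux_constantCoeff_expOf, mul_one, map_one, hD]
    have : (constantCoeff) M.det = (M.map (constantCoeff)).det :=
      RingHom.map_det (constantCoeff) M
    rw [this]
    have hMone : M.map (constantCoeff) = (1 : Matrix (Fin N) (Fin N) R) := by
      ext i j
      rw [Matrix.map_apply, hM, Matrix.sub_apply, Matrix.smul_apply, smul_eq_mul, map_sub,
        map_mul, constantCoeff_X, zero_mul, sub_zero]
      by_cases h : i = j <;> simp [Matrix.one_apply, h]
    rw [hMone, Matrix.det_one]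
  have := PowerSeries.derivative.ext (f := D * expOf S) (g := 1)
    (by rw [key, Derivation.map_one_eq_zero]) hc0
  exact this
end

section
/- Let ρ ∈ {±1} and let coefficients α_{M,λ} ∈ k (for M ≥ 0 and λ a partition with all parts even, with (−1)^M = ρ), finitely many nonzero, satisfy the recursion 2·m_λ(λ_j)·λ_j·α_{M,λ} = −2ρ·α_{M+λ_j, λ−λ_j} for every M, every such λ, and every part λ_j of λ (where λ−λ_j removes one copy of the part λ_j). Then for every M, λ: α_{M,λ} = ((−ρ)^{#λ}/(λ_1⋯λ_{#λ}·∏_j m_λ(j)!)) · α_{M+|λ|, ∅}. -/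
/-- Let `ρ ∈ {±1}` and let coefficients `α_{M,λ} ∈ k` (for `M ≥ 0` and `λ` a
partition with all parts even, with `(−1)^M = ρ`), finitely many nonzero, satisfy the
recursion `2·m_λ(λ_j)·λ_j·α_{M,λ} = −2ρ·α_{M+λ_j, λ−λ_j}` for every `M`, every such `λ`,
and every part `λ_j` of `λ`. Then
`α_{M,λ} = ((−ρ)^{#λ}/(λ_1⋯λ_{#λ}·∏_j m_λ(j)!)) · α_{M+|λ|, ∅}`.
Partitions with even parts are modelled as multisets of even positive integers. -/
theorem stmt_11 {k : Type*} [Field k] [CharZero k] (ρ : k) (hρ : ρ = 1 ∨ ρ = -1)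
    (α : ℕ → Multiset ℕ → k)
    (hfin : {p : ℕ × Multiset ℕ | α p.1 p.2 ≠ 0}.Finite)
    (hrec : ∀ (M : ℕ) (l : Multiset ℕ), (-1 : k) ^ M = ρ → (∀ j ∈ l, Even j ∧ 0 < j) →
      ∀ j ∈ l, 2 * (l.count j : k) * (j : k) * α M l = -(2 * ρ) * α (M + j) (l.erase j)) :
    ∀ (M : ℕ) (l : Multiset ℕ), (-1 : k) ^ M = ρ → (∀ j ∈ l, Even j ∧ 0 < j) →
      α M l = ((-ρ) ^ (Multiset.card l) /
          ((l.map (fun j : ℕ => (j : k))).prod *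
            ∏ j ∈ l.toFinset, ((l.count j).factorial : k))) *
        α (M + l.sum) 0 := by
  suffices h : ∀ (l : Multiset ℕ) (M : ℕ), (-1 : k) ^ M = ρ → (∀ j ∈ l, Even j ∧ 0 < j) →
      α M l = ((-ρ) ^ (Multiset.card l) /
          ((l.map (fun j : ℕ => (j : k))).prod *
            ∏ j ∈ l.toFinset, ((l.count j).factorial : k))) *
        α (M + l.sum) 0 by
    exact fun M l hM hl => h l M hM hl
  intro l
  induction l using Multiset.strongInductionOn with
  | ih l ih =>
    intro M hM hl
    rcases Multiset.empty_or_exists_mem l with rfl | ⟨j, hj⟩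
    · simp
    · set t := l.erase j with ht
      have hcons : j ::ₘ t = l := Multiset.cons_erase hj
      have hcj : 1 ≤ l.count j := Multiset.one_le_count_iff_mem.2 hj
      have hc0 : (l.count j : k) ≠ 0 := Nat.cast_ne_zero.2 (by omega)
      have hj0 : (j : k) ≠ 0 := Nat.cast_ne_zero.2 (hl j hj).2.ne'
      have hα : α M l = (-ρ) * α (M + j) t / ((l.count j : k) * (j : k)) := by
        rw [eq_div_iff (mul_ne_zero hc0 hj0)]
        linear_combination (hrec M l hM hl j hj) / 2
      have hM' : (-1 : k) ^ (M + j) = ρ := by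
        rw [pow_add, (hl j hj).1.neg_one_pow, mul_one]; exact hM
      have htl : ∀ i ∈ t, Even i ∧ 0 < i := fun i hi => hl i (Multiset.mem_of_mem_erase hi)
      have hlt : t < l := Multiset.erase_lt.2 hj
      have hIH := ih t hlt (M + j) hM' htl
      -- products
      have hcard : Multiset.card l = Multiset.card t + 1 := by
        rw [← hcons, Multiset.card_cons]
      have hsum : l.sum = j + t.sum := by rw [← hcons, Multiset.sum_cons]
      have hP : (l.map (fun j : ℕ => (j : k))).prod
          = (j : k) * (t.map (fun j : ℕ => (j : k))).prod := by
        rw [← hcons, Multiset.map_cons, Multiset.prod_cons]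
      have hF : (∏ i ∈ l.toFinset, ((l.count i).factorial : k))
          = (l.count j : k) * ∏ i ∈ t.toFinset, ((t.count i).factorial : k) := by
        have hsub : t.toFinset ⊆ l.toFinset := by
          intro x hx
          exact Multiset.mem_toFinset.2 (Multiset.mem_of_mem_erase (Multiset.mem_toFinset.1 hx))
        have h2 : (∏ i ∈ t.toFinset, ((t.count i).factorial : k))
            = ∏ i ∈ l.toFinset, ((t.count i).factorial : k) := by
          refine Finset.prod_subset hsub (fun x _ hxn => ?_)
          have hx0 : t.count x = 0 :=
            Multiset.count_eq_zero.2 (fun h => hxn (Multiset.mem_toFinset.2 h))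
          simp [hx0]
        rw [h2]
        have hjF : j ∈ l.toFinset := Multiset.mem_toFinset.2 hj
        rw [← Finset.mul_prod_erase _ _ hjF, ← Finset.mul_prod_erase _ (fun i => ((t.count i).factorial : k)) hjF]
        have hco : ∀ i ∈ l.toFinset.erase j, ((t.count i).factorial : k) = ((l.count i).factorial : k) := by
          intro i hi
          rw [ht, Multiset.count_erase_of_ne (Finset.ne_of_mem_erase hi)]
        rw [Finset.prod_congr rfl hco, ← mul_assoc]
        congr 1
        have hce : t.count j = l.count j - 1 := by rw [ht, Multiset.count_erase_self]
        rw [hce, ← Nat.cast_mul, ← Nat.mul_factorial_pred (by omega : l.count j ≠ 0)]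
      have hP0 : (t.map (fun j : ℕ => (j : k))).prod ≠ 0 := by
        refine Multiset.prod_ne_zero (fun h => ?_)
        obtain ⟨i, hi, h0⟩ := Multiset.mem_map.1 h
        exact Nat.cast_ne_zero.2 (htl i hi).2.ne' h0
      have hF0 : (∏ i ∈ t.toFinset, ((t.count i).factorial : k)) ≠ 0 := by
        refine Finset.prod_ne_zero_iff.2 (fun i _ => ?_)
        exact Nat.cast_ne_zero.2 (Nat.factorial_ne_zero _)
      rw [hα, hIH, hcard, hsum, hP, hF, pow_succ]
      have : M + j + t.sum = M + (j + t.sum) := by ring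
      rw [this]
      field_simp
end
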